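/- arXiv:2508.03198 — 2 statements merged into one kernel-verified Lean document; each statement's English description precedes it below -/
import Mathlib

section
/- Let m₀ be a locally finite measure on ℝ, let u₀ : ℝ → ℝ be Borel measurable with |u₀(η)| ≤ U for m₀-almost every η, let c > 0 and x ∈ ℝ, and define the generalized potential F(y) = ∫_{[0,y)} (η + c·u₀(η) − x) dm₀(η) for y ≥ 0 and F(y) = −∫_{[y,0)} (η + c·u₀(η) − x) dm₀(η) for y < 0. If y₀ ∈ ℝ is a global minimizer of F (i.e., F(y₀) ≤ F(y) for all y ∈ ℝ), then m₀({η : x + cU < η < y₀}) = 0. -/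
open MeasureTheory

/-- The generalized potential with integrand `g`:
`F(y) = ∫_{[0,y)} g dm₀` for `y ≥ 0` and `F(y) = −∫_{[y,0)} g dm₀` for `y < 0`. -/
noncomputable def genPotential (m₀ : Measure ℝ) (g : ℝ → ℝ) (y : ℝ) : ℝ :=
  if 0 ≤ y then ∫ η in Set.Ico 0 y, g η ∂m₀ else -∫ η in Set.Ico y 0, g η ∂m₀

/- STATEMENT 11: localization of global minimizers of the generalized potential
F(y) with integrand η + c·u₀(η) − x from above: if y₀ is a global minimizer, then
no m₀-mass lies strictly between x + cU and y₀. -/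
theorem minimizer_upper_localization
    (m₀ : Measure ℝ) [IsLocallyFiniteMeasure m₀]
    (u₀ : ℝ → ℝ) (hu₀ : Measurable u₀) (U : ℝ) (hU : ∀ᵐ η ∂m₀, |u₀ η| ≤ U)
    (c : ℝ) (hc : 0 < c) (x : ℝ) (y₀ : ℝ)
    (hmin : ∀ y : ℝ, genPotential m₀ (fun η => η + c * u₀ η - x) y₀
      ≤ genPotential m₀ (fun η => η + c * u₀ η - x) y) :
    m₀ (Set.Ioo (x + c * U) y₀) = 0 := by
  set b := x + c * U with hb_def
  set g : ℝ → ℝ := fun η => η + c * u₀ η - x with hg_def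
  by_cases hby : b < y₀
  swap
  · rw [Set.Ioo_eq_empty (by exact fun h => hby h), measure_empty]
  -- measurability of g
  have hgm : Measurable g := by fun_prop
  -- integrability on any Ico
  have hint : ∀ p q : ℝ, IntegrableOn g (Set.Ico p q) m₀ := by
    intro p q
    have hfin : m₀ (Set.Ico p q) ≠ ⊤ := by
      have h1 : m₀ (Set.Ico p q) ≤ m₀ (Set.Icc p q) :=
        measure_mono Set.Ico_subset_Icc_self
      exact ne_top_of_le_ne_top (isCompact_Icc.measure_lt_top (μ := m₀)).ne h1
    apply Measure.integrableOn_of_bounded hfin hgm.aestronglyMeasurable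
      (M := max |p| |q| + c * U + |x|)
    filter_upwards [ae_restrict_of_ae hU, ae_restrict_mem measurableSet_Ico]
      with η hη hmem
    have h1 : |η| ≤ max |p| |q| := by
      rcases hmem with ⟨hp, hq⟩
      rw [abs_le]
      constructor
      · have := neg_abs_le p
        have := le_max_left |p| |q|
        linarith
      · have := le_abs_self q
        have := le_max_right |p| |q|
        linarith
    have h2 : |c * u₀ η| ≤ c * U := by
      rw [abs_mul, abs_of_pos hc]
      exact mul_le_mul_of_nonneg_left hη hc.le
    calc ‖g η‖ = |η + c * u₀ η - x| := rfl
      _ ≤ |η| + |c * u₀ η| + |x| := by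
          calc |η + c * u₀ η - x| ≤ |η + c * u₀ η| + |x| := abs_sub _ _
            _ ≤ |η| + |c * u₀ η| + |x| := by
                have := abs_add_le η (c * u₀ η); linarith
      _ ≤ max |p| |q| + c * U + |x| := by linarith
  -- key inequality: ∫ over Ico b y₀ of g ≤ 0
  have key : ∫ η in Set.Ico b y₀, g η ∂m₀ ≤ 0 := by
    have hsplit : ∀ p q r : ℝ, p ≤ q → q ≤ r →
        ∫ η in Set.Ico p r, g η ∂m₀
          = (∫ η in Set.Ico p q, g η ∂m₀) + ∫ η in Set.Ico q r, g η ∂m₀ := by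
      intro p q r hpq hqr
      rw [← Set.Ico_union_Ico_eq_Ico hpq hqr,
        setIntegral_union (Set.Ico_disjoint_Ico_same)
          measurableSet_Ico (hint p q) (hint q r)]
    have hm := hmin b
    rcases le_or_gt 0 b with h0b | hb0
    · -- 0 ≤ b < y₀
      have h0y : (0:ℝ) ≤ y₀ := le_trans h0b hby.le
      rw [genPotential, genPotential, if_pos h0y, if_pos h0b,
        hsplit 0 b y₀ h0b hby.le] at hm
      linarith
    · rcases le_or_gt 0 y₀ with h0y | hy0
      · -- b < 0 ≤ y₀
        rw [genPotential, genPotential, if_pos h0y, if_neg (not_le.mpr hb0)] at hm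
        rw [hsplit b 0 y₀ hb0.le h0y]
        linarith
      · -- b < y₀ < 0
        rw [genPotential, genPotential, if_neg (not_le.mpr hy0),
          if_neg (not_le.mpr (lt_trans hby hy0)),
          hsplit b y₀ 0 hby.le hy0.le] at hm
        linarith
  -- nonnegativity a.e. on Ico b y₀
  have hnonneg : 0 ≤ᵐ[m₀.restrict (Set.Ico b y₀)] g := by
    filter_upwards [ae_restrict_of_ae hU, ae_restrict_mem measurableSet_Ico]
      with η hη hmem
    have : -U ≤ u₀ η := neg_le_of_abs_le hη
    have : -(c * U) ≤ c * u₀ η := by nlinarith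
    have hbη : b ≤ η := hmem.1
    simp only [hg_def, Pi.zero_apply]
    rw [hb_def] at hbη
    linarith
  have hIz : ∫ η in Set.Ico b y₀, g η ∂m₀ = 0 :=
    le_antisymm key (integral_nonneg_of_ae hnonneg)
  have hgz : g =ᵐ[m₀.restrict (Set.Ico b y₀)] 0 :=
    (integral_eq_zero_iff_of_nonneg_ae hnonneg (hint b y₀)).mp hIz
  -- on Ioo, g > 0 a.e., contradiction
  have hgz' : g =ᵐ[m₀.restrict (Set.Ioo b y₀)] 0 :=
    ae_restrict_of_ae_restrict_of_subset Set.Ioo_subset_Ico_self hgz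
  have hfalse : ∀ᵐ η ∂m₀.restrict (Set.Ioo b y₀), False := by
    filter_upwards [ae_restrict_of_ae hU, ae_restrict_mem measurableSet_Ioo, hgz']
      with η hη hmem hz
    have : -U ≤ u₀ η := neg_le_of_abs_le hη
    have h1 : -(c * U) ≤ c * u₀ η := by nlinarith
    have hbη : b < η := hmem.1
    rw [hb_def] at hbη
    have : (0:ℝ) < g η := by simp only [hg_def]; linarith
    rw [hz] at this
    exact lt_irrefl _ this
  have hbot : ae (m₀.restrict (Set.Ioo b y₀)) = ⊥ :=
    Filter.eventually_false_iff_eq_bot.mp hfalse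
  exact Measure.restrict_eq_zero.mp (ae_eq_bot.mp hbot)
end

section
/- Let m₀ be a locally finite measure on ℝ, let u₀ : ℝ → ℝ be Borel measurable with |u₀(η)| ≤ U for m₀-almost every η, let c > 0 and x ∈ ℝ, and define the generalized potential F(y) = ∫_{[0,y)} (η + c·u₀(η) − x) dm₀(η) for y ≥ 0 and F(y) = −∫_{[y,0)} (η + c·u₀(η) − x) dm₀(η) for y < 0. If y₀ ∈ ℝ is a global minimizer of F (i.e., F(y₀) ≤ F(y) for all y ∈ ℝ), then m₀({η : y₀ ≤ η < x − cU}) = 0. -/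
open MeasureTheory

private lemma integrableOn_aux
    (m₀ : Measure ℝ) [IsLocallyFiniteMeasure m₀]
    (u₀ : ℝ → ℝ) (hu₀ : Measurable u₀) (U : ℝ) (hU : ∀ᵐ η ∂m₀, |u₀ η| ≤ U)
    (c : ℝ) (hc : 0 < c) (x : ℝ) (a b : ℝ) :
    IntegrableOn (fun η => η + c * u₀ η - x) (Set.Ico a b) m₀ := by
  rcases le_or_gt b a with h | h
  · rw [Set.Ico_eq_empty (not_lt.mpr h)]; exact integrableOn_empty
  have hfin : m₀ (Set.Ico a b) < ⊤ :=
    lt_of_le_of_lt (measure_mono Set.Ico_subset_Icc_self) (isCompact_Icc.measure_lt_top)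
  apply Measure.integrableOn_of_bounded hfin.ne
  · exact ((measurable_id.add (hu₀.const_mul c)).sub measurable_const).aestronglyMeasurable
  · have h1 : ∀ᵐ η ∂m₀.restrict (Set.Ico a b), |u₀ η| ≤ U := ae_restrict_of_ae hU
    have h2 : ∀ᵐ η ∂m₀.restrict (Set.Ico a b), η ∈ Set.Ico a b :=
      ae_restrict_mem measurableSet_Ico
    filter_upwards [h1, h2] with η hη1 hη2
    have h3 : |η| ≤ max |a| |b| := by
      rcases hη2 with ⟨ha, hb⟩
      rw [abs_le]
      constructor
      · exact le_trans (neg_le_neg (le_max_left |a| |b|)) (le_trans (neg_abs_le a) ha)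
      · exact le_trans hb.le (le_trans (le_abs_self b) (le_max_right |a| |b|))
    have h4 : |c * u₀ η| ≤ c * U := by
      rw [abs_mul, abs_of_pos hc]
      exact mul_le_mul_of_nonneg_left hη1 hc.le
    calc ‖η + c * u₀ η - x‖ ≤ |η| + |c * u₀ η| + |x| := by
          simp only [Real.norm_eq_abs]
          calc |η + c * u₀ η - x| ≤ |η + c * u₀ η| + |x| := abs_sub _ _
            _ ≤ |η| + |c * u₀ η| + |x| := by gcongr; exact abs_add_le _ _
      _ ≤ max |a| |b| + c * U + |x| := by gcongr

theorem minimizer_lower_localization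
    (m₀ : Measure ℝ) [IsLocallyFiniteMeasure m₀]
    (u₀ : ℝ → ℝ) (hu₀ : Measurable u₀) (U : ℝ) (hU : ∀ᵐ η ∂m₀, |u₀ η| ≤ U)
    (c : ℝ) (hc : 0 < c) (x : ℝ) (y₀ : ℝ)
    (hmin : ∀ y : ℝ, genPotential m₀ (fun η => η + c * u₀ η - x) y₀
      ≤ genPotential m₀ (fun η => η + c * u₀ η - x) y) :
    m₀ (Set.Ico y₀ (x - c * U)) = 0 := by
  set g : ℝ → ℝ := fun η => η + c * u₀ η - x with hg
  set b : ℝ := x - c * U with hb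
  rcases le_or_gt b y₀ with hba | hab
  · rw [Set.Ico_eq_empty (not_lt.mpr hba)]; exact measure_empty
  have hint : ∀ a b' : ℝ, IntegrableOn g (Set.Ico a b') m₀ :=
    fun a b' => integrableOn_aux m₀ u₀ hu₀ U hU c hc x a b'
  -- key: the integral over [y₀, b) is nonnegative
  have hkey : 0 ≤ ∫ η in Set.Ico y₀ b, g η ∂m₀ := by
    have h := hmin b
    rcases le_or_gt 0 y₀ with h0 | h0
    · have h0b : 0 ≤ b := le_trans h0 hab.le
      rw [genPotential, genPotential, if_pos h0, if_pos h0b] at h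
      have hsplit : ∫ η in Set.Ico 0 b, g η ∂m₀
          = (∫ η in Set.Ico 0 y₀, g η ∂m₀) + ∫ η in Set.Ico y₀ b, g η ∂m₀ := by
        rw [← setIntegral_union (Set.Ico_disjoint_Ico_same)
          measurableSet_Ico (hint 0 y₀) (hint y₀ b),
          Set.Ico_union_Ico_eq_Ico h0 hab.le]
      linarith
    · rcases le_or_gt 0 b with h0b | h0b
      · rw [genPotential, genPotential, if_neg (not_le.mpr h0), if_pos h0b] at h
        have hsplit : ∫ η in Set.Ico y₀ b, g η ∂m₀
            = (∫ η in Set.Ico y₀ 0, g η ∂m₀) + ∫ η in Set.Ico 0 b, g η ∂m₀ := by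
          rw [← setIntegral_union (Set.Ico_disjoint_Ico_same)
            measurableSet_Ico (hint y₀ 0) (hint 0 b),
            Set.Ico_union_Ico_eq_Ico h0.le h0b]
        linarith
      · rw [genPotential, genPotential, if_neg (not_le.mpr h0),
          if_neg (not_le.mpr h0b)] at h
        have hsplit : ∫ η in Set.Ico y₀ 0, g η ∂m₀
            = (∫ η in Set.Ico y₀ b, g η ∂m₀) + ∫ η in Set.Ico b 0, g η ∂m₀ := by
          rw [← setIntegral_union (Set.Ico_disjoint_Ico_same)
            measurableSet_Ico (hint y₀ b) (hint b 0),
            Set.Ico_union_Ico_eq_Ico hab.le h0b.le]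
        linarith
  -- g < 0 a.e. on [y₀, b)
  have hneg : ∀ᵐ η ∂m₀.restrict (Set.Ico y₀ b), g η < 0 := by
    filter_upwards [ae_restrict_of_ae hU, ae_restrict_mem (measurableSet_Ico :
      MeasurableSet (Set.Ico y₀ b))] with η hη1 hη2
    have : c * u₀ η ≤ c * U := mul_le_mul_of_nonneg_left (le_trans (le_abs_self _) hη1) hc.le
    have hηb : η < b := hη2.2
    simp only [hg, hb] at *
    linarith
  -- conclude via nonneg function with zero integral
  have hnn : 0 ≤ᵐ[m₀.restrict (Set.Ico y₀ b)] fun η => -g η := by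
    filter_upwards [hneg] with η hη
    simp only [Pi.zero_apply]; linarith
  have hzero : ∫ η in Set.Ico y₀ b, -g η ∂m₀ = 0 := by
    have h1 : ∫ η in Set.Ico y₀ b, -g η ∂m₀ = -∫ η in Set.Ico y₀ b, g η ∂m₀ :=
      integral_neg g
    have h2 : 0 ≤ ∫ η in Set.Ico y₀ b, -g η ∂m₀ := integral_nonneg_of_ae hnn
    linarith
  have heq := (setIntegral_eq_zero_iff_of_nonneg_ae hnn ((hint y₀ b).neg)).mp hzero
  have hfalse : ∀ᵐ η ∂m₀.restrict (Set.Ico y₀ b), False := by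
    filter_upwards [hneg, heq] with η h1 h2
    simp only [Pi.zero_apply] at h2
    linarith
  have : m₀.restrict (Set.Ico y₀ b) Set.univ = 0 := by
    have := ae_iff.mp hfalse
    simpa using this
  rwa [Measure.restrict_apply_univ] at this
end
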